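/- arXiv:2505.03072 — 6 statements merged into one kernel-verified Lean document; each statement's English description precedes it below -/
import Mathlib

section
/- Adaptive sequential composition for zero-concentrated differential privacy, stated for a fixed pair of inputs: Let X, Y, Z be countable types, let M₁ : X → PMF Y and M₂ : X × Y → PMF Z be randomized mechanisms, and let x, x' ∈ X. Suppose ρ₁, ρ₂ ≥ 0 are such that (i) D_α(M₁(x) ‖ M₁(x')) ≤ ρ₁·α for all α ∈ (1, ∞), and (ii) for every y ∈ Y, D_α(M₂(x, y) ‖ M₂(x', y)) ≤ ρ₂·α for all α ∈ (1, ∞). Define the composed mechanism M₃ : X → PMF (Y × Z) by M₃(x) = do { y ← M₁(x); z ← M₂(x, y); return (y, z) } (monadic bind of probability mass functions). Then D_α(M₃(x) ‖ M₃(x')) ≤ (ρ₁ + ρ₂)·α for all α ∈ (1, ∞). -/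
open scoped ENNReal

/-- Rényi divergence of order `α` between two (sub)probability mass functions,
with the convention that it is `⊤` when absolute continuity fails
(since `0 ^ (1 - α) = ⊤` in `ℝ≥0∞` for `α > 1`). -/
noncomputable def renyiDiv {X : Type*} (α : ℝ) (P Q : X → ℝ≥0∞) : EReal :=
  (((α - 1)⁻¹ : ℝ) : EReal) * ENNReal.log (∑' x, P x ^ α * Q x ^ (1 - α))

lemma aux_mul_le_iff {r c : ℝ} (hr : 0 < r) (z : EReal) :
    ((r⁻¹ : ℝ) : EReal) * z ≤ ((c : ℝ) : EReal) ↔ z ≤ ((c * r : ℝ) : EReal) := by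
  induction z with
  | bot =>
      rw [EReal.coe_mul_bot_of_pos (by positivity)]
      simp
  | coe z =>
      rw [← EReal.coe_mul, EReal.coe_le_coe_iff, EReal.coe_le_coe_iff]
      rw [inv_mul_le_iff₀ hr, mul_comm]
  | top =>
      rw [EReal.coe_mul_top_of_pos (by positivity)]
      simp only [top_le_iff, ← EReal.coe_mul]
      simp only [EReal.coe_ne_top, false_iff]

lemma aux_sum_le {T : Type*} {P Q : T → ℝ≥0∞} {α c : ℝ} (hα : 1 < α)
    (h : renyiDiv α P Q ≤ ((c : ℝ) : EReal)) :
    (∑' t, P t ^ α * Q t ^ (1 - α)) ≤ EReal.exp ((c * (α - 1) : ℝ) : EReal) := by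
  have := (aux_mul_le_iff (r := α - 1) (c := c) (by linarith) _).mp h
  calc (∑' t, P t ^ α * Q t ^ (1 - α))
      = EReal.exp (ENNReal.log (∑' t, P t ^ α * Q t ^ (1 - α))) := (ENNReal.exp_log _).symm
    _ ≤ _ := EReal.exp_monotone this

lemma aux_comp_apply {Y Z : Type*} (p : PMF Y) (f : Y → PMF Z) (y : Y) (z : Z) :
    (p.bind fun y => (f y).bind fun z => PMF.pure (y, z)) (y, z) = p y * f y z := by
  classical
  rw [PMF.bind_apply, tsum_eq_single y]
  · rw [PMF.bind_apply, tsum_eq_single z]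
    · simp
    · intro z' hz'
      simp [PMF.pure_apply, Prod.ext_iff, Ne.symm hz']
  · intro y' hy'
    simp [PMF.bind_apply, PMF.pure_apply, Prod.ext_iff, Ne.symm hy']

/-- Adaptive sequential composition of zCDP, stated for a fixed pair of inputs. -/
theorem renyiDiv_adaptive_composition
    {X Y Z : Type*} [Countable X] [Countable Y] [Countable Z]
    (M₁ : X → PMF Y) (M₂ : X × Y → PMF Z) (x x' : X)
    (ρ₁ ρ₂ : ℝ) (hρ₁ : 0 ≤ ρ₁) (hρ₂ : 0 ≤ ρ₂)
    (hM₁ : ∀ α : ℝ, 1 < α → renyiDiv α (M₁ x) (M₁ x') ≤ ((ρ₁ * α : ℝ) : EReal))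
    (hM₂ : ∀ y : Y, ∀ α : ℝ, 1 < α →
      renyiDiv α (M₂ (x, y)) (M₂ (x', y)) ≤ ((ρ₂ * α : ℝ) : EReal))
    (M₃ : X → PMF (Y × Z))
    (hM₃ : ∀ u : X, M₃ u =
      (M₁ u).bind (fun y => ((M₂ (u, y)).bind (fun z => PMF.pure (y, z))))) :
    ∀ α : ℝ, 1 < α →
      renyiDiv α (M₃ x) (M₃ x') ≤ (((ρ₁ + ρ₂) * α : ℝ) : EReal) := by
  intro α hα
  have hα1 : (0 : ℝ) < α - 1 := by linarith
  have happ : ∀ (u : X) (y : Y) (z : Z), (M₃ u) (y, z) = (M₁ u) y * (M₂ (u, y)) z := by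
    intro u y z
    rw [hM₃ u]
    exact aux_comp_apply _ _ y z
  have hS : (∑' p : Y × Z, (M₃ x) p ^ α * (M₃ x') p ^ (1 - α))
      = ∑' y, ((M₁ x) y ^ α * (M₁ x') y ^ (1 - α)) *
          ∑' z, ((M₂ (x, y)) z ^ α * (M₂ (x', y)) z ^ (1 - α)) := by
    rw [ENNReal.tsum_prod']
    refine tsum_congr fun y => ?_
    have : ∀ z : Z, (M₃ x) (y, z) ^ α * (M₃ x') (y, z) ^ (1 - α)
        = ((M₁ x) y ^ α * (M₁ x') y ^ (1 - α)) *
            ((M₂ (x, y)) z ^ α * (M₂ (x', y)) z ^ (1 - α)) := by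
      intro z
      rw [happ, happ,
        ENNReal.mul_rpow_of_ne_top (PMF.apply_ne_top _ _) (PMF.apply_ne_top _ _),
        ENNReal.mul_rpow_of_ne_top (PMF.apply_ne_top _ _) (PMF.apply_ne_top _ _)]
      ring
    rw [tsum_congr this, ENNReal.tsum_mul_left]
  have h1 : (∑' y, (M₁ x) y ^ α * (M₁ x') y ^ (1 - α))
      ≤ EReal.exp ((ρ₁ * α * (α - 1) : ℝ) : EReal) := aux_sum_le hα (hM₁ α hα)
  have h2 : ∀ y : Y, (∑' z, (M₂ (x, y)) z ^ α * (M₂ (x', y)) z ^ (1 - α))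
      ≤ EReal.exp ((ρ₂ * α * (α - 1) : ℝ) : EReal) := fun y => aux_sum_le hα (hM₂ y α hα)
  have hfinal : (∑' p : Y × Z, (M₃ x) p ^ α * (M₃ x') p ^ (1 - α))
      ≤ EReal.exp (((ρ₁ + ρ₂) * α * (α - 1) : ℝ) : EReal) := by
    rw [hS]
    calc (∑' y, ((M₁ x) y ^ α * (M₁ x') y ^ (1 - α)) *
          ∑' z, ((M₂ (x, y)) z ^ α * (M₂ (x', y)) z ^ (1 - α)))
        ≤ ∑' y, ((M₁ x) y ^ α * (M₁ x') y ^ (1 - α)) *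
            EReal.exp ((ρ₂ * α * (α - 1) : ℝ) : EReal) :=
          ENNReal.tsum_le_tsum fun y => mul_le_mul_right (h2 y) _
      _ = (∑' y, (M₁ x) y ^ α * (M₁ x') y ^ (1 - α)) *
            EReal.exp ((ρ₂ * α * (α - 1) : ℝ) : EReal) := ENNReal.tsum_mul_right
      _ ≤ EReal.exp ((ρ₁ * α * (α - 1) : ℝ) : EReal) *
            EReal.exp ((ρ₂ * α * (α - 1) : ℝ) : EReal) := mul_le_mul_left h1 _
      _ = EReal.exp (((ρ₁ + ρ₂) * α * (α - 1) : ℝ) : EReal) := by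
          rw [← EReal.exp_add, ← EReal.coe_add,
            show ρ₁ * α * (α - 1) + ρ₂ * α * (α - 1) = (ρ₁ + ρ₂) * α * (α - 1) by ring]
  have hlog : ENNReal.log (∑' p : Y × Z, (M₃ x) p ^ α * (M₃ x') p ^ (1 - α))
      ≤ (((ρ₁ + ρ₂) * α * (α - 1) : ℝ) : EReal) := by
    have := ENNReal.log_monotone hfinal
    rwa [EReal.log_exp] at this
  rw [renyiDiv]
  exact (aux_mul_le_iff hα1 _).mpr hlog
end

section
/- Postprocessing for zero-concentrated differential privacy (data-processing inequality for Rényi divergence, discrete form): Let P and Q be probability mass functions on a countable set Y, let Z be a countable set, and let f : Y → PMF Z be an arbitrary randomized postprocessing map. Then for every α ∈ (1, ∞), D_α(P.bind f ‖ Q.bind f) ≤ D_α(P ‖ Q), where P.bind f denotes the distribution of f(y) for y drawn from P. In particular, if D_α(P ‖ Q) ≤ ρ·α for all α ∈ (1, ∞), then D_α(P.bind f ‖ Q.bind f) ≤ ρ·α for all α ∈ (1, ∞). -/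
open scoped ENNReal

/-- tsum version of the weighted Hölder inequality. -/
lemma tsum_inner_le_weight_mul_Lp {ι : Type*} {p : ℝ} (hp : 1 ≤ p) (w g : ι → ℝ≥0∞) :
    ∑' i, w i * g i ≤ (∑' i, w i) ^ (1 - p⁻¹) * (∑' i, w i * g i ^ p) ^ p⁻¹ := by
  have h1 : (0:ℝ) ≤ 1 - p⁻¹ := by
    have : p⁻¹ ≤ 1 := inv_le_one_of_one_le₀ hp
    linarith
  have h2 : (0:ℝ) ≤ p⁻¹ := by positivity
  rw [ENNReal.tsum_eq_iSup_sum]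
  refine iSup_le fun s => ?_
  calc ∑ i ∈ s, w i * g i
      ≤ (∑ i ∈ s, w i) ^ (1 - p⁻¹) * (∑ i ∈ s, w i * g i ^ p) ^ p⁻¹ :=
        ENNReal.inner_le_weight_mul_Lp_of_nonneg s hp w g
    _ ≤ (∑' i, w i) ^ (1 - p⁻¹) * (∑' i, w i * g i ^ p) ^ p⁻¹ :=
        mul_le_mul' (ENNReal.rpow_le_rpow (ENNReal.sum_le_tsum s) h1)
          (ENNReal.rpow_le_rpow (ENNReal.sum_le_tsum s) h2)

/-- Per-point data processing / reverse Hölder inequality. -/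
lemma key_ineq {ι : Type*} (a b : ι → ℝ≥0∞) (ha : ∑' i, a i ≠ ⊤) (hb : ∑' i, b i ≠ ⊤)
    {α : ℝ} (hα : 1 < α) :
    (∑' i, a i) ^ α * (∑' i, b i) ^ (1 - α) ≤ ∑' i, a i ^ α * b i ^ (1 - α) := by
  have hα0 : (0:ℝ) < α := by linarith
  by_cases hac : ∀ i, b i = 0 → a i = 0
  · by_cases hb0 : ∑' i, b i = 0
    · have hba : ∀ i, a i = 0 := fun i => hac i (ENNReal.tsum_eq_zero.mp hb0 i)
      have : ∑' i, a i = 0 := ENNReal.tsum_eq_zero.mpr hba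
      rw [this, ENNReal.zero_rpow_of_pos hα0, zero_mul]
      exact zero_le
    · -- apply weighted Hölder with w = b, g = a / b
      have hbne : ∀ i, b i ≠ ⊤ := fun i => ne_top_of_le_ne_top hb (ENNReal.le_tsum i)
      have hane : ∀ i, a i ≠ ⊤ := fun i => ne_top_of_le_ne_top ha (ENNReal.le_tsum i)
      have hw : ∀ i, b i * (a i / b i) = a i := by
        intro i
        by_cases hbi : b i = 0
        · simp [hbi, hac i hbi]
        · exact ENNReal.mul_div_cancel hbi (hbne i)
      have hw2 : ∀ i, b i * (a i / b i) ^ α = a i ^ α * b i ^ (1 - α) := by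
        intro i
        by_cases hbi : b i = 0
        · have hai := hac i hbi
          simp [hbi, hai, ENNReal.zero_rpow_of_pos hα0]
        · rw [ENNReal.div_rpow_of_nonneg _ _ hα0.le]
          have : b i ^ (1 - α) = b i * (b i ^ α)⁻¹ := by
            rw [show (1 - α) = 1 + (-α) by ring, ENNReal.rpow_add _ _ hbi (hbne i),
              ENNReal.rpow_one, ENNReal.rpow_neg]
          rw [this, div_eq_mul_inv]
          ring
      have H := tsum_inner_le_weight_mul_Lp hα.le b (fun i => a i / b i)
      rw [tsum_congr hw, tsum_congr hw2] at H
      set A := ∑' i, a i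
      set B := ∑' i, b i
      set S := ∑' i, a i ^ α * b i ^ (1 - α) with hS
      have hBne : B ≠ ⊤ := hb
      have H2 : A ^ α ≤ B ^ (α - 1) * S := by
        calc A ^ α ≤ (B ^ (1 - α⁻¹) * S ^ α⁻¹) ^ α := ENNReal.rpow_le_rpow H hα0.le
          _ = B ^ (α - 1) * S := by
            rw [ENNReal.mul_rpow_of_nonneg _ _ hα0.le, ← ENNReal.rpow_mul, ← ENNReal.rpow_mul]
            rw [show (1 - α⁻¹) * α = α - 1 by field_simp, show α⁻¹ * α = 1 by field_simp,
              ENNReal.rpow_one]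
      calc A ^ α * B ^ (1 - α) ≤ (B ^ (α - 1) * S) * B ^ (1 - α) :=
            mul_le_mul_left H2 _
        _ = S * (B ^ (α - 1) * B ^ (1 - α)) := by ring
        _ = S := by
            rw [← ENNReal.rpow_add _ _ hb0 hBne, show (α - 1) + (1 - α) = 0 by ring,
              ENNReal.rpow_zero, mul_one]
  · push_neg at hac
    obtain ⟨i, hbi, hai⟩ := hac
    refine le_top.trans ?_
    rw [top_le_iff]
    have : a i ^ α * b i ^ (1 - α) = ⊤ := by
      rw [hbi, ENNReal.zero_rpow_of_neg (by linarith), ENNReal.mul_top]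
      intro h
      rcases ENNReal.rpow_eq_zero_iff.mp h with ⟨h1, _⟩ | ⟨_, h2⟩
      · exact hai h1
      · linarith
    exact top_le_iff.mp (this ▸ ENNReal.le_tsum i)

/-- Postprocessing for zCDP: the data-processing inequality for Rényi divergence
under a randomized postprocessing map, together with the zCDP consequence. -/
theorem renyiDiv_postprocessing
    {Y Z : Type*} [Countable Y] [Countable Z]
    (P Q : PMF Y) (f : Y → PMF Z) :
    (∀ α : ℝ, 1 < α → renyiDiv α (P.bind f) (Q.bind f) ≤ renyiDiv α P Q) ∧
    (∀ ρ : ℝ, (∀ α : ℝ, 1 < α → renyiDiv α P Q ≤ ((ρ * α : ℝ) : EReal)) →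
      ∀ α : ℝ, 1 < α → renyiDiv α (P.bind f) (Q.bind f) ≤ ((ρ * α : ℝ) : EReal)) := by
  have main : ∀ α : ℝ, 1 < α → renyiDiv α (P.bind f) (Q.bind f) ≤ renyiDiv α P Q := by
    intro α hα
    have hα0 : (0:ℝ) < α := by linarith
    have key : (∑' z, (P.bind f) z ^ α * (Q.bind f) z ^ (1 - α)) ≤
        ∑' y, P y ^ α * Q y ^ (1 - α) := by
      have step1 : ∀ z : Z, (P.bind f) z ^ α * (Q.bind f) z ^ (1 - α) ≤
          ∑' y, (P y * f y z) ^ α * (Q y * f y z) ^ (1 - α) := by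
        intro z
        rw [PMF.bind_apply, PMF.bind_apply]
        exact key_ineq _ _ (by rw [← PMF.bind_apply]; exact (P.bind f).apply_ne_top z)
          (by rw [← PMF.bind_apply]; exact (Q.bind f).apply_ne_top z) hα
      have step2 : ∀ z : Z, ∀ y : Y, (P y * f y z) ^ α * (Q y * f y z) ^ (1 - α) =
          P y ^ α * Q y ^ (1 - α) * f y z := by
        intro z y
        rw [ENNReal.mul_rpow_of_nonneg _ _ hα0.le,
          ENNReal.mul_rpow_of_ne_top (Q.apply_ne_top y) ((f y).apply_ne_top z)]
        have : f y z ^ α * f y z ^ (1 - α) = f y z := by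
          by_cases hfz : f y z = 0
          · simp [hfz, ENNReal.zero_rpow_of_pos hα0]
          · rw [← ENNReal.rpow_add _ _ hfz ((f y).apply_ne_top z),
              show α + (1 - α) = 1 by ring, ENNReal.rpow_one]
        calc P y ^ α * f y z ^ α * (Q y ^ (1 - α) * f y z ^ (1 - α))
            = P y ^ α * Q y ^ (1 - α) * (f y z ^ α * f y z ^ (1 - α)) := by ring
          _ = P y ^ α * Q y ^ (1 - α) * f y z := by rw [this]
      calc ∑' z, (P.bind f) z ^ α * (Q.bind f) z ^ (1 - α)
          ≤ ∑' z, ∑' y, (P y * f y z) ^ α * (Q y * f y z) ^ (1 - α) :=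
            ENNReal.tsum_le_tsum step1
        _ = ∑' y, ∑' z, P y ^ α * Q y ^ (1 - α) * f y z := by
            rw [ENNReal.tsum_comm]
            exact tsum_congr fun y => tsum_congr fun z => step2 z y
        _ = ∑' y, P y ^ α * Q y ^ (1 - α) := by
            refine tsum_congr fun y => ?_
            rw [ENNReal.tsum_mul_left, (f y).tsum_coe, mul_one]
    unfold renyiDiv
    exact mul_le_mul_of_nonneg_left (ENNReal.log_monotone key)
      (by exact_mod_cast inv_nonneg.mpr (by linarith : (0:ℝ) ≤ α - 1))
  exact ⟨main, fun ρ h α hα => (main α hα).trans (h α hα)⟩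
end

section
/- Rényi divergence between shifted discrete Gaussians: Let σ > 0, let m ∈ ℤ, let P be the probability mass function of m + X where X ∼ N_ℤ(σ²), and let Q be the probability mass function of N_ℤ(σ²). Then for every α ∈ (1, ∞), D_α(P ‖ Q) ≤ α·m²/(2σ²). -/
set_option maxHeartbeats 1000000

open scoped ENNReal

/-- The discrete Gaussian mass function `N_ℤ(v)` with variance parameter `v = σ²`:
`Pr[X = x] = exp(-x²/(2v)) / ∑_{y ∈ ℤ} exp(-y²/(2v))`. -/
noncomputable def discreteGaussian (v : ℝ) (x : ℤ) : ℝ≥0∞ :=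
  ENNReal.ofReal
    (Real.exp (-(x : ℝ) ^ 2 / (2 * v)) / ∑' y : ℤ, Real.exp (-(y : ℝ) ^ 2 / (2 * v)))

section AuxiliaryLemmas

open Real Complex

private lemma exp_sq_le' {s : ℝ} (hs : 0 < s) (t u : ℝ) :
    Real.exp (-(u - t)^2 / s) ≤ Real.exp (t + s/4) * Real.exp (-u) := by
  rw [← Real.exp_add, Real.exp_le_exp, div_le_iff₀ hs]
  nlinarith [sq_nonneg (u - t - s/2)]

private lemma summable_shift {s : ℝ} (hs : 0 < s) (t : ℝ) :
    Summable (fun x : ℤ => Real.exp (-((x:ℝ) - t)^2 / s)) := by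
  apply Summable.of_nat_of_neg
  · refine Summable.of_nonneg_of_le (f := fun n : ℕ => Real.exp (t + s/4) * Real.exp (-(n:ℝ)))
      (fun n => (Real.exp_pos _).le) (fun n => ?_) (Real.summable_exp_neg_nat.mul_left _)
    push_cast
    exact exp_sq_le' hs t n
  · refine Summable.of_nonneg_of_le (f := fun n : ℕ => Real.exp (-t + s/4) * Real.exp (-(n:ℝ)))
      (fun n => (Real.exp_pos _).le) (fun n => ?_) (Real.summable_exp_neg_nat.mul_left _)
    have h1 : ((((-(n:ℤ)) : ℤ)):ℝ) - t = -((n:ℝ) - (-t)) := by push_cast; ring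
    rw [h1, neg_sq]
    exact exp_sq_le' hs (-t) n

private lemma summable_base {s : ℝ} (hs : 0 < s) :
    Summable (fun n : ℤ => Real.exp (-(π^2*s) * (n:ℝ)^2)) := by
  have h : 0 < (π^2*s)⁻¹ := by positivity
  refine (summable_shift h 0).congr fun n => ?_
  congr 1
  field_simp
  ring


private lemma tsum_shift_le {s : ℝ} (hs : 0 < s) (t : ℝ) :
    ∑' x : ℤ, Real.exp (-((x:ℝ) - t)^2 / s) ≤ ∑' x : ℤ, Real.exp (-(x:ℝ)^2 / s) := by
  have hπ : (0:ℝ) < π := Real.pi_pos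
  set a : ℝ := (π*s)⁻¹ with ha_def
  have ha : 0 < a := by positivity
  set b : ℝ := t * a with hb_def
  set T : ℝ := ∑' n : ℤ, Real.exp (-(π^2*s) * (n:ℝ)^2) with hT_def
  set c : ℝ := 1 / a ^ (1/2 : ℝ) with hc_def
  have hc : 0 ≤ c := by positivity
  -- θ(0) = c * T
  have hθ0 : ∑' x : ℤ, Real.exp (-(x:ℝ)^2 / s) = c * T := by
    have h0 := Real.tsum_exp_neg_mul_int_sq ha
    have e1 : ∀ n : ℤ, -π * a * (n:ℝ)^2 = -(n:ℝ)^2 / s := by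
      intro n; rw [ha_def]; field_simp
    have e2 : ∀ n : ℤ, -π / a * (n:ℝ)^2 = -(π^2*s) * (n:ℝ)^2 := by
      intro n; rw [ha_def, div_eq_mul_inv, inv_inv]; ring
    simp only [e1, e2] at h0
    rw [h0, hT_def, hc_def]
  -- complex Poisson summation
  have haC : 0 < ((a:ℂ)).re := by simpa using ha
  have key := Complex.tsum_exp_neg_quadratic haC (b := (b:ℂ))
  -- the shifted theta as a complex number
  have hsC : (s:ℂ) ≠ 0 := by exact_mod_cast hs.ne'
  have hπC : ((π:ℝ):ℂ) ≠ 0 := by exact_mod_cast Real.pi_ne_zero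
  have hterm : ∀ n : ℤ, ((Real.exp (-((n:ℝ) - t)^2 / s) : ℝ) : ℂ)
      = cexp (((-t^2/s : ℝ)):ℂ) * cexp (-(π:ℂ) * (a:ℂ) * (n:ℂ)^2 + 2 * (π:ℂ) * (b:ℂ) * (n:ℂ)) := by
    intro n
    rw [Complex.ofReal_exp, ← Complex.exp_add]
    congr 1
    push_cast
    rw [ha_def, hb_def, ha_def]
    push_cast
    field_simp
    ring
  have hofReal : ((∑' x : ℤ, Real.exp (-((x:ℝ) - t)^2 / s) : ℝ) : ℂ)
      = cexp (((-t^2/s : ℝ)):ℂ) * ∑' n : ℤ, cexp (-(π:ℂ) * (a:ℂ) * (n:ℂ)^2 + 2 * (π:ℂ) * (b:ℂ) * (n:ℂ)) := by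
    rw [Complex.ofReal_tsum]
    rw [← tsum_mul_left]
    exact tsum_congr hterm
  -- norm of the dual terms
  have hdual : ∀ n : ℤ, ‖cexp (-(π:ℂ) / (a:ℂ) * ((n:ℂ) + I * (b:ℂ))^2)‖
      = Real.exp (t^2/s) * Real.exp (-(π^2*s) * (n:ℝ)^2) := by
    intro n
    rw [Complex.norm_exp, ← Real.exp_add]
    congr 1
    have h1 : -(π:ℂ) / (a:ℂ) * ((n:ℂ) + I * (b:ℂ))^2
        = ((-(π^2*s) * ((n:ℝ)^2 - b^2) : ℝ) : ℂ) + ((-(π^2*s) * (2*(n:ℝ)*b) : ℝ):ℂ) * I := by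
      have hI : ((n:ℂ) + I * (b:ℂ))^2 = (((n:ℝ)^2 - b^2 : ℝ):ℂ) + ((2*(n:ℝ)*b : ℝ):ℂ) * I := by
        push_cast
        ring_nf
        rw [Complex.I_sq]
        ring
      have hpa : -(π:ℂ) / (a:ℂ) = ((-(π^2*s) : ℝ):ℂ) := by
        rw [ha_def]; push_cast; field_simp
      rw [hI, hpa]
      push_cast
      ring
    rw [h1]
    simp only [Complex.add_re, Complex.ofReal_re, Complex.mul_re, Complex.I_re, Complex.I_im,
      Complex.ofReal_im]
    have hb2 : (π^2*s) * b^2 = t^2/s := by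
      rw [hb_def, ha_def]; field_simp
    ring_nf
    ring_nf at hb2 ⊢
    nlinarith [hb2]
  have hdsummable : Summable (fun n : ℤ => ‖cexp (-(π:ℂ) / (a:ℂ) * ((n:ℂ) + I * (b:ℂ))^2)‖) := by
    refine ((summable_base hs).mul_left (Real.exp (t^2/s))).congr fun n => ?_
    exact (hdual n).symm
  -- put it together
  have hnonneg : 0 ≤ ∑' x : ℤ, Real.exp (-((x:ℝ) - t)^2 / s) :=
    tsum_nonneg fun x => (Real.exp_pos _).le
  have habs : ∑' x : ℤ, Real.exp (-((x:ℝ) - t)^2 / s)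
      = ‖((∑' x : ℤ, Real.exp (-((x:ℝ) - t)^2 / s) : ℝ) : ℂ)‖ := by
    rw [Complex.norm_real, Real.norm_eq_abs, _root_.abs_of_nonneg hnonneg]
  rw [habs, hofReal, key]
  rw [norm_mul, norm_mul]
  have habs1 : ‖cexp (((-t^2/s : ℝ)):ℂ)‖ = Real.exp (-t^2/s) := by
    rw [Complex.norm_exp, Complex.ofReal_re]
  have habs2 : ‖1 / (a:ℂ) ^ (1/2 : ℂ)‖ = c := by
    have h12 : ((a:ℂ)) ^ (1/2 : ℂ) = ((a ^ (1/2:ℝ) : ℝ) : ℂ) := by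
      have h2 : (1/2 : ℂ) = ((1/2 : ℝ) : ℂ) := by norm_num
      rw [h2, ← Complex.ofReal_cpow ha.le]
    rw [hc_def, norm_div, norm_one, h12, Complex.norm_real, Real.norm_eq_abs]
    rw [_root_.abs_of_nonneg (by positivity : (0:ℝ) ≤ a ^ (1/2:ℝ))]
  rw [habs1, habs2]
  set Z : ℝ := ‖∑' n : ℤ, cexp (-(π:ℂ) / (a:ℂ) * ((n:ℂ) + I * (b:ℂ))^2)‖ with hZ_def
  have hZle : Z ≤ Real.exp (t^2/s) * T := by
    have h1 : Z ≤ ∑' n : ℤ, ‖cexp (-(π:ℂ) / (a:ℂ) * ((n:ℂ) + I * (b:ℂ))^2)‖ := by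
      have hd' : Summable fun n : ℤ => ‖cexp (-(π:ℂ) / (a:ℂ) * ((n:ℂ) + I * (b:ℂ))^2)‖ := by
        exact hdsummable
      rw [hZ_def]
      exact norm_tsum_le_tsum_norm hd'
    have h2 : ∑' n : ℤ, ‖cexp (-(π:ℂ) / (a:ℂ) * ((n:ℂ) + I * (b:ℂ))^2)‖
        = Real.exp (t^2/s) * T := by
      rw [hT_def, ← tsum_mul_left]
      exact tsum_congr hdual
    linarith
  have hZnn : 0 ≤ Z := norm_nonneg _
  calc Real.exp (-t^2/s) * (c * Z)
      ≤ Real.exp (-t^2/s) * (c * (Real.exp (t^2/s) * T)) := by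
        have := mul_le_mul_of_nonneg_left hZle hc
        exact mul_le_mul_of_nonneg_left this (Real.exp_pos _).le
    _ = (Real.exp (-t^2/s) * Real.exp (t^2/s)) * (c * T) := by ring
    _ = c * T := by
        have hz : -t^2/s + t^2/s = 0 := by ring
        rw [← Real.exp_add, hz, Real.exp_zero, one_mul]
    _ = ∑' x : ℤ, Real.exp (-(x:ℝ)^2 / s) := hθ0.symm

end AuxiliaryLemmas

/-- Rényi divergence between shifted discrete Gaussians:
`D_α(m + N_ℤ(σ²) ‖ N_ℤ(σ²)) ≤ α m² / (2σ²)`. -/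
theorem renyiDiv_shifted_discreteGaussian (σ : ℝ) (hσ : 0 < σ) (m : ℤ) :
    ∀ α : ℝ, 1 < α →
      renyiDiv α (fun x : ℤ => discreteGaussian (σ ^ 2) (x - m))
        (fun x : ℤ => discreteGaussian (σ ^ 2) x)
        ≤ ((α * (m : ℝ) ^ 2 / (2 * σ ^ 2) : ℝ) : EReal) := by
  intro α hα
  have hs : (0:ℝ) < 2 * σ^2 := by positivity
  have hα1 : (0:ℝ) < α - 1 := by linarith
  have hα0 : (0:ℝ) < α := by linarith
  set S : ℝ := ∑' y : ℤ, Real.exp (-(y:ℝ)^2 / (2 * σ^2)) with hS_def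
  have hSsum : Summable (fun y : ℤ => Real.exp (-(y:ℝ)^2 / (2 * σ^2))) := by
    refine (summable_shift hs 0).congr fun n => by norm_num
  have hSpos : 0 < S := Summable.tsum_pos hSsum (fun x => (Real.exp_pos _).le) 0 (Real.exp_pos _)
  set t : ℝ := α * m with ht_def
  set c : ℝ := α * (α-1) * (m:ℝ)^2 / (2 * σ^2) with hc_def
  have hpt : ∀ x : ℤ,
      discreteGaussian (σ^2) (x - m) ^ α * discreteGaussian (σ^2) x ^ (1-α)
      = ENNReal.ofReal (Real.exp c / S * Real.exp (-((x:ℝ) - t)^2 / (2 * σ^2))) := by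
    intro x
    rw [discreteGaussian, discreteGaussian, ← hS_def]
    rw [ENNReal.ofReal_rpow_of_pos (by positivity), ENNReal.ofReal_rpow_of_pos (by positivity),
       ← ENNReal.ofReal_mul (by positivity)]
    congr 1
    rw [Real.div_rpow (Real.exp_pos _).le hSpos.le, Real.div_rpow (Real.exp_pos _).le hSpos.le,
        div_mul_div_comm, ← Real.exp_mul, ← Real.exp_mul, ← Real.exp_add,
        ← Real.rpow_add hSpos]
    have h1 : α + (1 - α) = 1 := by ring
    rw [h1, Real.rpow_one]
    have hre : Real.exp c / S * Real.exp (-((x:ℝ) - t)^2 / (2 * σ^2))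
        = Real.exp (c + -((x:ℝ) - t)^2 / (2 * σ^2)) / S := by
      rw [Real.exp_add]; ring
    rw [hre]
    congr 1
    rw [Real.exp_eq_exp, hc_def, ht_def]
    push_cast
    field_simp
    ring
  have hsum_le : (∑' x : ℤ, discreteGaussian (σ^2) (x-m) ^ α * discreteGaussian (σ^2) x ^ (1-α))
      ≤ ENNReal.ofReal (Real.exp c) := by
    have hsum_eq : (∑' x : ℤ, discreteGaussian (σ^2) (x-m) ^ α * discreteGaussian (σ^2) x ^ (1-α))
        = ENNReal.ofReal (Real.exp c / S)
          * ∑' x : ℤ, ENNReal.ofReal (Real.exp (-((x:ℝ)-t)^2 / (2 * σ^2))) := by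
      rw [← ENNReal.tsum_mul_left]
      exact tsum_congr fun x => by rw [hpt x, ENNReal.ofReal_mul (by positivity)]
    rw [hsum_eq,
      ← ENNReal.ofReal_tsum_of_nonneg (fun n => (Real.exp_pos _).le) (summable_shift hs t),
      ← ENNReal.ofReal_mul (by positivity)]
    apply ENNReal.ofReal_le_ofReal
    calc Real.exp c / S * (∑' x : ℤ, Real.exp (-((x:ℝ)-t)^2 / (2 * σ^2)))
        ≤ Real.exp c / S * S := by
          apply mul_le_mul_of_nonneg_left (tsum_shift_le hs t) (by positivity)
      _ = Real.exp c := div_mul_cancel₀ _ hSpos.ne'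
  have hlog : ENNReal.log (∑' x : ℤ,
      discreteGaussian (σ^2) (x-m) ^ α * discreteGaussian (σ^2) x ^ (1-α)) ≤ (c : EReal) := by
    calc ENNReal.log _ ≤ ENNReal.log (ENNReal.ofReal (Real.exp c)) := ENNReal.log_monotone hsum_le
      _ = (c : EReal) := by rw [ENNReal.log_ofReal_of_pos (Real.exp_pos _), Real.log_exp]
  have hcoef : (0:EReal) ≤ (((α-1)⁻¹ : ℝ) : EReal) := by
    apply EReal.coe_nonneg.mpr
    positivity
  show (((α - 1)⁻¹ : ℝ) : EReal) * ENNReal.log (∑' x : ℤ,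
      discreteGaussian (σ^2) (x-m) ^ α * discreteGaussian (σ^2) x ^ (1-α))
      ≤ ((α * (m : ℝ) ^ 2 / (2 * σ ^ 2) : ℝ) : EReal)
  calc (((α - 1)⁻¹ : ℝ) : EReal) * ENNReal.log (∑' x : ℤ,
      discreteGaussian (σ^2) (x-m) ^ α * discreteGaussian (σ^2) x ^ (1-α))
      ≤ (((α - 1)⁻¹ : ℝ) : EReal) * (c : EReal) := mul_le_mul_of_nonneg_left hlog hcoef
    _ = (((α-1)⁻¹ * c : ℝ) : EReal) := (EReal.coe_mul _ _).symm
    _ = ((α * (m : ℝ) ^ 2 / (2 * σ ^ 2) : ℝ) : EReal) := by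
        congr 1
        rw [hc_def]
        field_simp
end

section
/- L2 sensitivity of the stacked per-level count vector under addition/removal of one record (key step of Theorem 1): Let R be a type of records, 𝒫 a finite set of population groups, g : R → Finset 𝒫 a map with |g(r)| ≤ s for every r ∈ R (stability s), 𝒯 ⊆ 𝒫 a set of eligible population groups, and for each P ∈ 𝒯 a finite category type K_P and a category map f_P : R → K_P. For a finite multiset D over R, define the stacked count vector V(D), indexed by pairs (P, k) with P ∈ 𝒯 and k ∈ K_P, by V(D)_{(P,k)} = number of elements r of D (with multiplicity) such that P ∈ g(r) and f_P(r) = k. Then for every finite multiset D and every record r ∈ R, at most s coordinates of V change, each by exactly 1, when r is added; in particular ‖V(D + {r}) − V(D)‖₂ ≤ √s. -/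
/-- The stacked count vector for one population-group level: for a pair `(P, k)`
with `P` an eligible population group (`P ∈ T`) and `k` a category,
`stackedCount T g f D ⟨P, k⟩` is the number of records `r` in the finite multiset
`D` (with multiplicity) such that `P ∈ g r` and `f P r = k`. -/
def stackedCount {R PG : Type*} [DecidableEq PG] {K : PG → Type*}
    [∀ P, DecidableEq (K P)] (T : Finset PG) (g : R → Finset PG)
    (f : (P : PG) → R → K P) (D : Multiset R) :
    ((P : {P : PG // P ∈ T}) × K P.val) → ℤ :=
  fun c => ((D.filter fun r => c.1.val ∈ g r ∧ f c.1.val r = c.2).card : ℤ)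

/-- L2 sensitivity of the stacked per-level count vector under addition of one
record: at most `s` coordinates change, each by exactly `1`, so the Euclidean norm
of the change is at most `√s`. -/
theorem stackedCount_add_sensitivity {R PG : Type*} [Fintype PG] [DecidableEq PG]
    {K : PG → Type*} [∀ P, Fintype (K P)] [∀ P, DecidableEq (K P)]
    (T : Finset PG) (g : R → Finset PG) (s : ℕ) (hs : ∀ r : R, (g r).card ≤ s)
    (f : (P : PG) → R → K P) (D : Multiset R) (r : R) :
    (∀ c, stackedCount T g f (r ::ₘ D) c - stackedCount T g f D c ∈ ({0, 1} : Set ℤ)) ∧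
    (Finset.univ.filter fun c =>
        stackedCount T g f (r ::ₘ D) c ≠ stackedCount T g f D c).card ≤ s ∧
    Real.sqrt (∑ c, ((stackedCount T g f (r ::ₘ D) c - stackedCount T g f D c : ℤ) : ℝ) ^ 2)
      ≤ Real.sqrt s := by
  have hdiff : ∀ c, stackedCount T g f (r ::ₘ D) c - stackedCount T g f D c
      = if c.1.val ∈ g r ∧ f c.1.val r = c.2 then 1 else 0 := by
    intro c
    simp only [stackedCount, Multiset.filter_cons]
    split <;> simp
  have hiff : ∀ c, (stackedCount T g f (r ::ₘ D) c ≠ stackedCount T g f D c)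
      ↔ (c.1.val ∈ g r ∧ f c.1.val r = c.2) := by
    intro c
    have h := hdiff c
    constructor
    · intro hne
      by_contra hh
      rw [if_neg hh] at h
      omega
    · intro hh
      rw [if_pos hh] at h
      omega
  have hcard : (Finset.univ.filter fun c =>
      stackedCount T g f (r ::ₘ D) c ≠ stackedCount T g f D c).card ≤ s := by
    refine le_trans ?_ (hs r)
    apply Finset.card_le_card_of_injOn (fun c => c.1.val)
    · intro c hc
      simp only [Finset.mem_coe, Finset.mem_filter] at hc
      exact ((hiff c).mp hc.2).1
    · intro c hc c' hc' h
      simp only [Finset.mem_coe, Finset.mem_filter] at hc hc'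
      have h1 := (hiff c).mp hc.2
      have h2 := (hiff c').mp hc'.2
      have hfst : c.1 = c'.1 := Subtype.ext h
      obtain ⟨⟨P, hP⟩, k⟩ := c
      obtain ⟨⟨P', hP'⟩, k'⟩ := c'
      cases hfst
      simp only [Sigma.mk.inj_iff, heq_eq_eq, true_and]
      exact h1.2.symm.trans h2.2
  refine ⟨fun c => by rw [hdiff]; split <;> simp, hcard, ?_⟩
  apply Real.sqrt_le_sqrt
  calc (∑ c, ((stackedCount T g f (r ::ₘ D) c - stackedCount T g f D c : ℤ) : ℝ) ^ 2)
      = ∑ c, (if stackedCount T g f (r ::ₘ D) c ≠ stackedCount T g f D c then (1:ℝ) else 0) := by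
        apply Finset.sum_congr rfl
        intro c _
        rw [hdiff]
        by_cases hh : c.1.val ∈ g r ∧ f c.1.val r = c.2
        · rw [if_pos hh, if_pos ((hiff c).mpr hh)]; norm_num
        · rw [if_neg hh, if_neg (fun hne => hh ((hiff c).mp hne))]; norm_num
    _ = ((Finset.univ.filter fun c =>
          stackedCount T g f (r ::ₘ D) c ≠ stackedCount T g f D c).card : ℝ) := by
        rw [Finset.sum_boole]
    _ ≤ s := by exact_mod_cast hcard
end

section
/- L2 sensitivity of the stacked per-level count vector under replacement of one record (key step of Theorem 2): Let R be a type of records, 𝒫 a finite set of population groups, g : R → Finset 𝒫 a map with |g(r)| ≤ s for every r ∈ R, 𝒯 ⊆ 𝒫 a set of eligible population groups, and for each P ∈ 𝒯 a finite category type K_P and a category map f_P : R → K_P; let V(D) be the stacked count vector with V(D)_{(P,k)} = number of elements r of D with P ∈ g(r) and f_P(r) = k. Then for every finite multiset D over R, every record r contained in D, and every record r' ∈ R, the bounded-neighboring database D' = (D − {r}) + {r'} satisfies ‖V(D') − V(D)‖₂ ≤ √(2s). -/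
lemma stackedCount_cons {R PG : Type*} [DecidableEq PG] {K : PG → Type*}
    [∀ P, DecidableEq (K P)] (T : Finset PG) (g : R → Finset PG)
    (f : (P : PG) → R → K P) (D : Multiset R) (x : R)
    (c : (P : {P : PG // P ∈ T}) × K P.val) :
    stackedCount T g f (x ::ₘ D) c =
      stackedCount T g f D c +
        (if c.1.val ∈ g x ∧ f c.1.val x = c.2 then 1 else 0) := by
  simp only [stackedCount, Multiset.filter_cons]
  split <;> simp [add_comm]

lemma ind_sum_le {R PG : Type*} [Fintype PG] [DecidableEq PG] {K : PG → Type*}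
    [∀ P, Fintype (K P)] [∀ P, DecidableEq (K P)]
    (T : Finset PG) (g : R → Finset PG) (s : ℕ) (hs : ∀ r : R, (g r).card ≤ s)
    (f : (P : PG) → R → K P) (x : R) :
    (∑ c : (P : {P : PG // P ∈ T}) × K P.val,
        (if c.1.val ∈ g x ∧ f c.1.val x = c.2 then (1 : ℝ) else 0)) ≤ s := by
  rw [← Finset.univ_sigma_univ, Finset.sum_sigma]
  have h1 : ∀ P : {P : PG // P ∈ T},
      (∑ k : K P.val, (if P.val ∈ g x ∧ f P.val x = k then (1 : ℝ) else 0)) =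
        (if P.val ∈ g x then 1 else 0) := by
    intro P
    by_cases h : P.val ∈ g x
    · simp [h, Finset.sum_ite_eq' Finset.univ (f P.val x) (fun _ => (1 : ℝ))]
    · simp [h]
  simp only [h1]
  calc (∑ P : {P : PG // P ∈ T}, (if P.val ∈ g x then (1 : ℝ) else 0))
      = ∑ P ∈ T.attach, (if P.val ∈ g x then (1 : ℝ) else 0) := rfl
    _ = ∑ P ∈ T, (if P ∈ g x then (1 : ℝ) else 0) := Finset.sum_attach T (fun P => if P ∈ g x then (1:ℝ) else 0)
    _ = ((T.filter (· ∈ g x)).card : ℝ) := by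
        rw [Finset.card_filter]; push_cast [Finset.sum_ite_eq]; rfl
    _ ≤ ((g x).card : ℝ) := by
        exact_mod_cast Finset.card_le_card (fun P hP => (Finset.mem_filter.mp hP).2)
    _ ≤ s := by exact_mod_cast hs x

/-- L2 sensitivity of the stacked per-level count vector under replacement of one
record: if `D' = (D - {r}) + {r'}` with `r ∈ D`, then `‖V(D') - V(D)‖₂ ≤ √(2s)`. -/
theorem stackedCount_replace_sensitivity {R PG : Type*} [DecidableEq R] [Fintype PG]
    [DecidableEq PG] {K : PG → Type*} [∀ P, Fintype (K P)] [∀ P, DecidableEq (K P)]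
    (T : Finset PG) (g : R → Finset PG) (s : ℕ) (hs : ∀ r : R, (g r).card ≤ s)
    (f : (P : PG) → R → K P) (D : Multiset R) (r : R) (hr : r ∈ D) (r' : R) :
    Real.sqrt (∑ c,
        ((stackedCount T g f (r' ::ₘ D.erase r) c - stackedCount T g f D c : ℤ) : ℝ) ^ 2)
      ≤ Real.sqrt (2 * s) := by
  apply Real.sqrt_le_sqrt
  set ind : ((P : {P : PG // P ∈ T}) × K P.val) → R → ℤ :=
    fun c x => if c.1.val ∈ g x ∧ f c.1.val x = c.2 then 1 else 0 with hind
  have hdiff : ∀ c, stackedCount T g f (r' ::ₘ D.erase r) c - stackedCount T g f D c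
      = ind c r' - ind c r := by
    intro c
    have hD : stackedCount T g f D c = stackedCount T g f (D.erase r) c + ind c r := by
      conv_lhs => rw [← Multiset.cons_erase hr]
      exact stackedCount_cons T g f (D.erase r) r c
    rw [stackedCount_cons, hD]
    ring
  have hbound : ∀ c, (((stackedCount T g f (r' ::ₘ D.erase r) c
      - stackedCount T g f D c : ℤ) : ℝ)) ^ 2
      ≤ (if c.1.val ∈ g r' ∧ f c.1.val r' = c.2 then (1:ℝ) else 0)
        + (if c.1.val ∈ g r ∧ f c.1.val r = c.2 then (1:ℝ) else 0) := by
    intro c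
    rw [hdiff c]
    simp only [hind]
    split <;> split <;> norm_num
  calc (∑ c : (P : {P : PG // P ∈ T}) × K P.val, (((stackedCount T g f (r' ::ₘ D.erase r) c
        - stackedCount T g f D c : ℤ) : ℝ)) ^ 2)
      ≤ ∑ c : (P : {P : PG // P ∈ T}) × K P.val, ((if c.1.val ∈ g r' ∧ f c.1.val r' = c.2 then (1:ℝ) else 0)
        + (if c.1.val ∈ g r ∧ f c.1.val r = c.2 then (1:ℝ) else 0)) :=
        Finset.sum_le_sum fun c _ => hbound c
    _ = (∑ c : (P : {P : PG // P ∈ T}) × K P.val, (if c.1.val ∈ g r' ∧ f c.1.val r' = c.2 then (1:ℝ) else 0))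
        + (∑ c : (P : {P : PG // P ∈ T}) × K P.val, (if c.1.val ∈ g r ∧ f c.1.val r = c.2 then (1:ℝ) else 0)) :=
        Finset.sum_add_distrib
    _ ≤ s + s := add_le_add (ind_sum_le T g s hs f r') (ind_sum_le T g s hs f r)
    _ = 2 * s := by ring
end

section
/- Theorem 1 (SafeTab-H satisfies ρ_total-zCDP), stated for the concrete noisy-count mechanism: Let R be a type of records and let ω ≥ 1. For each level i ∈ {1, …, ω}, let 𝒫ᵢ be a finite set of population groups, gᵢ : R → Finset 𝒫ᵢ a map with |gᵢ(r)| ≤ sᵢ for all r, 𝒯ᵢ ⊆ 𝒫ᵢ a set of eligible groups, and for each table class t ∈ {HT, T} a family of category maps (f_{i,P}^t : R → K_{i,P}^t)_{P∈𝒯ᵢ} into finite types, with stacked count vectors Vᵢ^t(D); let ρᵢ^HT, ρᵢ^T > 0. Define the mechanism M(D) that outputs, jointly over all i and t, the vectors Vᵢ^t(D) + Yᵢ^t, where all noise vectors Yᵢ^t are independent and each coordinate of Yᵢ^t is distributed as N_ℤ(sᵢ/(2ρᵢ^t)). Let ρ_total = Σ_{i=1}^{ω} (ρᵢ^HT + ρᵢ^T).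 Then for all finite multisets D, D' over R whose symmetric difference is 1 and all α ∈ (1, ∞), D_α(M(D) ‖ M(D')) ≤ ρ_total·α; i.e., M satisfies ρ_total-zCDP. -/
open scoped ENNReal

open scoped Real

universe u

lemma tsum_prod_pi_fin : ∀ {n : ℕ} {γ : Fin n → Type u} (f : ∀ i, γ i → ℝ≥0∞),
    ∑' w : ∀ i, γ i, ∏ i, f i (w i) = ∏ i, ∑' x, f i x := by
  intro n
  induction n with
  | zero => intro γ f; simp [tsum_fintype]
  | succ n ih =>
    intro γ f
    rw [← (Fin.consEquiv γ).tsum_eq, ENNReal.tsum_prod']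
    have h : ∀ (x : γ 0) (w : ∀ i : Fin n, γ i.succ),
        ∏ i, f i ((Fin.consEquiv γ) (x, w) i) = f 0 x * ∏ i : Fin n, f i.succ (w i) := by
      intro x w
      rw [Fin.prod_univ_succ]
      simp [Fin.consEquiv]
    simp_rw [h, ENNReal.tsum_mul_left, ENNReal.tsum_mul_right, ih fun i => f i.succ,
      Fin.prod_univ_succ]

lemma tsum_prod_pi {ι : Type*} [Fintype ι] {γ : ι → Type u} (f : ∀ i, γ i → ℝ≥0∞) :
    ∑' w : ∀ i, γ i, ∏ i, f i (w i) = ∏ i, ∑' x, f i x := by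
  classical
  let e : ι ≃ Fin (Fintype.card ι) := Fintype.equivFin ι
  rw [← (Equiv.piCongrLeft γ e.symm).tsum_eq]
  have h1 : ∀ u : ∀ j, γ (e.symm j),
      ∏ i, f i ((Equiv.piCongrLeft γ e.symm) u i)
        = ∏ j, f (e.symm j) (u j) := by
    intro u
    rw [← Equiv.prod_comp e.symm (fun i => f i ((Equiv.piCongrLeft γ e.symm) u i))]
    refine Finset.prod_congr rfl fun j _ => ?_
    rw [Equiv.piCongrLeft_apply_apply]
  simp_rw [h1]
  rw [tsum_prod_pi_fin fun j => f (e.symm j)]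
  exact Equiv.prod_comp e.symm fun i => ∑' x, f i x

lemma summable_exp_neg_pi {t : ℝ} (ht : 0 < t) (c : ℝ) :
    Summable fun n : ℤ => Real.exp (-π * t * ((n : ℝ) + c) ^ 2) := by
  refine (HurwitzKernelBounds.summable_f_int 0 c ht).congr fun n => ?_
  simp only [HurwitzKernelBounds.f_int, pow_zero, one_mul]
  congr 1
  ring

lemma theta_le' {aa : ℝ} (h : 0 < aa) (μ : ℝ) :
    ∑' n : ℤ, Real.exp (-π * aa * ((n : ℝ) + μ) ^ 2)
      ≤ ∑' n : ℤ, Real.exp (-π * aa * (n : ℝ) ^ 2) := by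
  have haa : (0:ℝ) < aa ^ (1/2 : ℝ) := Real.rpow_pos_of_pos h _
  set b : ℂ := ((-aa * μ : ℝ) : ℂ) with hb
  have key := Complex.tsum_exp_neg_quadratic (a := (aa : ℂ)) (by simpa using h) b
  have h1 : ∀ n : ℤ, ((Real.exp (-π * aa * ((n : ℝ) + μ) ^ 2) : ℝ) : ℂ)
      = Complex.exp ((-π * aa * μ ^ 2 : ℝ) : ℂ)
        * Complex.exp (-π * aa * (n : ℂ) ^ 2 + 2 * π * b * n) := by
    intro n
    rw [← Complex.exp_add, Complex.ofReal_exp]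
    congr 1
    push_cast [hb]
    ring
  have h2 : ((∑' n : ℤ, Real.exp (-π * aa * ((n : ℝ) + μ) ^ 2) : ℝ) : ℂ)
      = Complex.exp ((-π * aa * μ ^ 2 : ℝ) : ℂ)
        * (1 / (aa : ℂ) ^ (1/2 : ℂ)
          * ∑' n : ℤ, Complex.exp (-π / aa * ((n : ℂ) + Complex.I * b) ^ 2)) := by
    rw [Complex.ofReal_tsum]
    simp_rw [h1]
    rw [tsum_mul_left, key]
  have hexp : ∀ n : ℤ, -↑π / (aa:ℂ) * ((n : ℂ) + Complex.I * b) ^ 2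
      = ((π * aa * μ ^ 2 + -(π / aa) * (n : ℝ) ^ 2 : ℝ) : ℂ)
        + ((2 * π * μ * n : ℝ) : ℂ) * Complex.I := by
    intro n
    have hr : (-↑π / (aa:ℂ)) = ((-π/aa : ℝ) : ℂ) := by push_cast; ring
    rw [hr, hb]
    simp only [Complex.ext_iff, sq, Complex.mul_re, Complex.mul_im, Complex.add_re,
      Complex.add_im, Complex.I_re, Complex.I_im, Complex.ofReal_re, Complex.ofReal_im,
      Complex.intCast_re, Complex.intCast_im]
    constructor <;> (field_simp; ring)
  have hnormterm : ∀ n : ℤ, ‖Complex.exp (-↑π / (aa:ℂ) * ((n : ℂ) + Complex.I * b) ^ 2)‖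
      = Real.exp (π * aa * μ ^ 2) * Real.exp (-(π / aa) * (n : ℝ) ^ 2) := by
    intro n
    rw [hexp n, Complex.norm_exp, ← Real.exp_add]
    congr 1
    simp only [Complex.add_re, Complex.ofReal_re, Complex.mul_re, Complex.ofReal_im,
      Complex.I_re, Complex.I_im]
    ring
  have hsum0 : Summable fun n : ℤ => Real.exp (-(π / aa) * (n : ℝ) ^ 2) := by
    refine (summable_exp_neg_pi (t := aa⁻¹) (by positivity) 0).congr fun n => ?_
    congr 1
    field_simp
    ring
  have hsummable : Summable fun n : ℤ =>
      ‖Complex.exp (-↑π / (aa:ℂ) * ((n : ℂ) + Complex.I * b) ^ 2)‖ := by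
    refine Summable.congr ((hsum0.mul_left (Real.exp (π * aa * μ ^ 2))))
      fun n => (hnormterm n).symm
  have habs : ∑' n : ℤ, Real.exp (-π * aa * ((n : ℝ) + μ) ^ 2)
      ≤ Real.exp (-π * aa * μ ^ 2) * (1 / aa ^ (1/2 : ℝ)
        * (Real.exp (π * aa * μ ^ 2) * ∑' n : ℤ, Real.exp (-(π / aa) * (n : ℝ) ^ 2))) := by
    have h3 : ∑' n : ℤ, Real.exp (-π * aa * ((n : ℝ) + μ) ^ 2)
        = ‖((∑' n : ℤ, Real.exp (-π * aa * ((n : ℝ) + μ) ^ 2) : ℝ) : ℂ)‖ := by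
      rw [Complex.norm_real, Real.norm_eq_abs,
        abs_of_nonneg (tsum_nonneg fun n => (Real.exp_pos _).le)]
    rw [h3, h2, norm_mul, norm_mul]
    have hA : ‖Complex.exp ((-π * aa * μ ^ 2 : ℝ) : ℂ)‖ = Real.exp (-π * aa * μ ^ 2) := by
      rw [Complex.norm_exp, Complex.ofReal_re]
    have hB : ‖1 / (aa : ℂ) ^ (1/2 : ℂ)‖ = 1 / aa ^ (1/2 : ℝ) := by
      have : ((aa ^ (1/2 : ℝ) : ℝ) : ℂ) = (aa : ℂ) ^ (1/2 : ℂ) := by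
        rw [Complex.ofReal_cpow h.le]
        norm_num
      rw [← this, norm_div, Complex.norm_real, norm_one, Real.norm_eq_abs,
        abs_of_pos haa]
    have hS : ‖∑' n : ℤ, Complex.exp (-↑π / (aa:ℂ) * ((n : ℂ) + Complex.I * b) ^ 2)‖
        ≤ Real.exp (π * aa * μ ^ 2) * ∑' n : ℤ, Real.exp (-(π / aa) * (n : ℝ) ^ 2) := by
      refine (norm_tsum_le_tsum_norm hsummable).trans_eq ?_
      rw [← tsum_mul_left]
      exact tsum_congr hnormterm
    rw [hA, hB]
    exact mul_le_mul_of_nonneg_left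
      (mul_le_mul_of_nonneg_left hS (by positivity)) (Real.exp_nonneg _)
  refine habs.trans ?_
  have hcancel : Real.exp (-π * aa * μ ^ 2) * (1 / aa ^ (1/2 : ℝ)
        * (Real.exp (π * aa * μ ^ 2) * ∑' n : ℤ, Real.exp (-(π / aa) * (n : ℝ) ^ 2)))
      = (Real.exp (-π * aa * μ ^ 2) * Real.exp (π * aa * μ ^ 2))
        * (1 / aa ^ (1/2 : ℝ) * ∑' n : ℤ, Real.exp (-(π / aa) * (n : ℝ) ^ 2)) := by ring
  rw [hcancel, ← Real.exp_add]
  have hz : -π * aa * μ ^ 2 + π * aa * μ ^ 2 = 0 := by ring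
  rw [hz, Real.exp_zero, one_mul]
  have e1 : ∑' (n : ℤ), Real.exp (-(π / aa) * (n : ℝ) ^ 2)
      = ∑' (n : ℤ), Real.exp (-π / aa * (n : ℝ) ^ 2) :=
    tsum_congr fun n => by congr 1; ring
  rw [e1, ← Real.tsum_exp_neg_mul_int_sq h]

lemma summable_gauss {v : ℝ} (hv : 0 < v) (μ : ℝ) :
    Summable fun n : ℤ => Real.exp (-((n : ℝ) - μ) ^ 2 / (2 * v)) := by
  refine (summable_exp_neg_pi (t := (2 * π * v)⁻¹) (by positivity) (-μ)).congr fun n => ?_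
  congr 1
  field_simp
  ring

lemma theta_le {v : ℝ} (hv : 0 < v) (μ : ℝ) :
    ∑' n : ℤ, Real.exp (-((n : ℝ) - μ) ^ 2 / (2 * v))
      ≤ ∑' n : ℤ, Real.exp (-(n : ℝ) ^ 2 / (2 * v)) := by
  have haa : (0:ℝ) < (2 * π * v)⁻¹ := by positivity
  have h1 : ∑' n : ℤ, Real.exp (-((n : ℝ) - μ) ^ 2 / (2 * v))
      = ∑' n : ℤ, Real.exp (-π * (2 * π * v)⁻¹ * ((n : ℝ) + (-μ)) ^ 2) :=
    tsum_congr fun n => by congr 1; field_simp; ring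
  have h2 : ∑' n : ℤ, Real.exp (-(n : ℝ) ^ 2 / (2 * v))
      = ∑' n : ℤ, Real.exp (-π * (2 * π * v)⁻¹ * (n : ℝ) ^ 2) :=
    tsum_congr fun n => by congr 1; field_simp
  rw [h1, h2]
  exact theta_le' haa (-μ)

lemma gauss_sum_pos {v : ℝ} (hv : 0 < v) :
    0 < ∑' y : ℤ, Real.exp (-(y : ℝ) ^ 2 / (2 * v)) := by
  have hs : Summable fun y : ℤ => Real.exp (-(y : ℝ) ^ 2 / (2 * v)) := by
    refine (summable_gauss hv 0).congr fun n => by norm_num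
  exact Summable.tsum_pos hs (fun n => (Real.exp_pos _).le) 0 (Real.exp_pos _)

lemma dg_pos {v : ℝ} (hv : 0 < v) (x : ℤ) : 0 < discreteGaussian v x :=
  ENNReal.ofReal_pos.mpr (div_pos (Real.exp_pos _) (gauss_sum_pos hv))

lemma dg_ne_top (v : ℝ) (x : ℤ) : discreteGaussian v x ≠ ⊤ := ENNReal.ofReal_ne_top

lemma dg_zero (x : ℤ) : discreteGaussian 0 x = 0 := by
  have h0 : ∑' y : ℤ, Real.exp (-(y : ℝ) ^ 2 / (2 * (0:ℝ))) = ∑' _ : ℤ, (1:ℝ) :=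
    tsum_congr fun n => by norm_num
  have h1 : ¬ Summable (fun _ : ℤ => (1:ℝ)) := by
    rw [summable_const_iff]
    norm_num
  rw [discreteGaussian, h0, tsum_eq_zero_of_not_summable h1]
  simp

lemma coord_bound {v : ℝ} (hv : 0 < v) (a b : ℤ) {α : ℝ} (hα : 1 < α) :
    ∑' z : ℤ, discreteGaussian v (z - a) ^ α * discreteGaussian v (z - b) ^ (1 - α)
      ≤ ENNReal.ofReal (Real.exp (α * (α - 1) * ((a : ℝ) - b) ^ 2 / (2 * v))) := by
  set S : ℝ := ∑' y : ℤ, Real.exp (-(y : ℝ) ^ 2 / (2 * v)) with hSdef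
  have hS : 0 < S := gauss_sum_pos hv
  set d : ℝ := (a : ℝ) - b with hd
  set μ : ℝ := (b : ℝ) + α * d with hμ
  set K : ℝ := Real.exp (α * (α - 1) * d ^ 2 / (2 * v)) with hK
  have hterm : ∀ z : ℤ,
      discreteGaussian v (z - a) ^ α * discreteGaussian v (z - b) ^ (1 - α)
        = ENNReal.ofReal (K * Real.exp (-((z : ℝ) - μ) ^ 2 / (2 * v)) / S) := by
    intro z
    have e1pos : 0 < Real.exp (-((z - a : ℤ) : ℝ) ^ 2 / (2 * v)) / S :=
      div_pos (Real.exp_pos _) hS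
    have e2pos : 0 < Real.exp (-((z - b : ℤ) : ℝ) ^ 2 / (2 * v)) / S :=
      div_pos (Real.exp_pos _) hS
    rw [discreteGaussian, discreteGaussian, ← hSdef, ENNReal.ofReal_rpow_of_pos e1pos,
      ENNReal.ofReal_rpow_of_pos e2pos,
      ← ENNReal.ofReal_mul (Real.rpow_nonneg e1pos.le _)]
    congr 1
    rw [Real.div_rpow (Real.exp_pos _).le hS.le, Real.div_rpow (Real.exp_pos _).le hS.le,
      div_mul_div_comm, ← Real.rpow_add hS, add_sub_cancel, Real.rpow_one,
      ← Real.exp_mul, ← Real.exp_mul, ← Real.exp_add, hK, ← Real.exp_add]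
    congr 1
    push_cast
    rw [hμ, hd]
    field_simp
    ring
  calc ∑' z : ℤ, discreteGaussian v (z - a) ^ α * discreteGaussian v (z - b) ^ (1 - α)
      = ∑' z : ℤ, ENNReal.ofReal (K * Real.exp (-((z : ℝ) - μ) ^ 2 / (2 * v)) / S) :=
        tsum_congr hterm
    _ = ENNReal.ofReal (∑' z : ℤ, K * Real.exp (-((z : ℝ) - μ) ^ 2 / (2 * v)) / S) := by
        refine (ENNReal.ofReal_tsum_of_nonneg (fun z => by positivity) ?_).symm
        exact ((summable_gauss hv μ).mul_left K).div_const S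
    _ ≤ ENNReal.ofReal K := by
        refine ENNReal.ofReal_le_ofReal ?_
        rw [tsum_div_const, tsum_mul_left]
        rw [div_le_iff₀ hS]
        have := theta_le hv μ
        calc K * ∑' z : ℤ, Real.exp (-((z : ℝ) - μ) ^ 2 / (2 * v))
            ≤ K * S := by
              refine mul_le_mul_of_nonneg_left ?_ (Real.exp_nonneg _)
              exact this
          _ = K * S := rfl
    _ = ENNReal.ofReal (Real.exp (α * (α - 1) * ((a : ℝ) - b) ^ 2 / (2 * v))) := by rw [hK]

lemma count_diff {R PG : Type*} [DecidableEq R] [DecidableEq PG] {K : PG → Type*}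
    [∀ P, DecidableEq (K P)] (T : Finset PG) (g : R → Finset PG)
    (f : (P : PG) → R → K P) (D : Multiset R) (r : R)
    (c : (P : {P : PG // P ∈ T}) × K P.val) :
    stackedCount T g f (D + {r}) c = stackedCount T g f D c
      + (if c.1.val ∈ g r ∧ f c.1.val r = c.2 then 1 else 0) := by
  simp only [stackedCount, Multiset.filter_add, Multiset.filter_singleton, Multiset.card_add]
  split <;> simp

lemma sum_ind_le {R PG : Type*} [Fintype PG] [DecidableEq PG] {K : PG → Type*}
    [∀ P, Fintype (K P)] [∀ P, DecidableEq (K P)] (T : Finset PG) (g : R → Finset PG)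
    (f : (P : PG) → R → K P) (r : R) :
    ∑ c : ((P : {P : PG // P ∈ T}) × K P.val),
        (if c.1.val ∈ g r ∧ f c.1.val r = c.2 then (1:ℝ) else 0)
      ≤ ((g r).card : ℝ) := by
  classical
  rw [← Finset.univ_sigma_univ, Finset.sum_sigma]
  have hinner : ∀ P : {P : PG // P ∈ T},
      ∑ k : K P.val, (if P.val ∈ g r ∧ f P.val r = k then (1:ℝ) else 0)
        = if P.val ∈ g r then (1:ℝ) else 0 := by
    intro P
    by_cases h : P.val ∈ g r
    · simp only [h, true_and, if_true]
      rw [Finset.sum_ite_eq (Finset.univ) (f P.val r) (fun _ => (1:ℝ))]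
      simp
    · simp [h]
  simp_rw [hinner]
  have : ∑ P : {P : PG // P ∈ T}, (if P.val ∈ g r then (1:ℝ) else 0)
      = ∑ P ∈ T, (if P ∈ g r then (1:ℝ) else 0) := (Finset.sum_subtype (p := fun P => P ∈ T) T (fun x => Iff.rfl) (fun P => if P ∈ g r then (1:ℝ) else 0)).symm
  rw [this, Finset.sum_ite_mem]
  simp only [Finset.sum_const, nsmul_eq_mul, mul_one]
  exact_mod_cast Nat.cast_le.mpr (Finset.card_le_card (Finset.inter_subset_right))

lemma neighbor_cases {R : Type*} [DecidableEq R] (D D' : Multiset R)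
    (h : Multiset.card (D - D' + (D' - D)) = 1) :
    (∃ r, D = D' + {r}) ∨ (∃ r, D' = D + {r}) := by
  rw [Multiset.card_add] at h
  rcases Nat.add_eq_one_iff.mp h with ⟨h1, h2⟩ | ⟨h1, h2⟩
  · rw [Multiset.card_eq_zero, tsub_eq_zero_iff_le] at h1
    rcases Multiset.card_eq_one.mp h2 with ⟨r, hr⟩
    refine Or.inr ⟨r, ?_⟩
    rw [← hr, add_comm]
    exact (tsub_add_cancel_of_le h1).symm
  · rw [Multiset.card_eq_zero, tsub_eq_zero_iff_le] at h2
    rcases Multiset.card_eq_one.mp h1 with ⟨r, hr⟩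
    refine Or.inl ⟨r, ?_⟩
    rw [← hr, add_comm]
    exact (tsub_add_cancel_of_le h2).symm

lemma ereal_final {c q : ℝ} (hc : 0 < c) {x : EReal} (hx : x ≤ (q : EReal)) :
    (c : EReal) * x ≤ ((c * q : ℝ) : EReal) := by
  induction x using EReal.rec with
  | bot =>
      rw [EReal.mul_bot_of_pos (by exact_mod_cast hc)]
      exact bot_le
  | coe r =>
      rw [← EReal.coe_mul]
      exact EReal.coe_le_coe_iff.mpr
        (mul_le_mul_of_nonneg_left (EReal.coe_le_coe_iff.mp hx) hc.le)
  | top => exact absurd (hx.trans_lt (EReal.coe_lt_top q)) (lt_irrefl _)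

lemma tsum_prod_mul {Aa Bb : Type*} (X : Aa → ℝ≥0∞) (Y : Bb → ℝ≥0∞) :
    ∑' p : Aa × Bb, X p.1 * Y p.2 = (∑' u, X u) * (∑' u, Y u) := by
  rw [ENNReal.tsum_prod']
  have h : ∀ a, ∑' b : Bb, X a * Y b = X a * ∑' b, Y b := fun a => ENNReal.tsum_mul_left
  exact (tsum_congr fun a => h a).trans ENNReal.tsum_mul_right

lemma prod_rpow' {ι : Type*} {s : Finset ι} {f : ι → ℝ≥0∞} (hf : ∀ i ∈ s, f i ≠ ⊤) (r : ℝ) :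
    (∏ i ∈ s, f i) ^ r = ∏ i ∈ s, f i ^ r := (ENNReal.prod_rpow_of_ne_top hf r).symm

lemma prod_ofReal_exp {ι : Type*} [Fintype ι] (e : ι → ℝ) :
    ∏ c : ι, ENNReal.ofReal (Real.exp (e c)) = ENNReal.ofReal (Real.exp (∑ c, e c)) := by
  rw [Real.exp_sum, ENNReal.ofReal_prod_of_nonneg fun i _ => Real.exp_nonneg _]

lemma level_eq {A B : Type*} [Fintype A] [Fintype B]
    (E1 : A → ℤ → ℝ≥0∞) (E2 : B → ℤ → ℝ≥0∞) :
    (∑' p : (A → ℤ) × (B → ℤ), (∏ c, E1 c (p.1 c)) * (∏ c, E2 c (p.2 c)))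
      = (∏ c, ∑' z : ℤ, E1 c z) * (∏ c, ∑' z : ℤ, E2 c z) := by
  calc (∑' p : (A → ℤ) × (B → ℤ), (∏ c, E1 c (p.1 c)) * (∏ c, E2 c (p.2 c)))
      = (∑' u : A → ℤ, ∏ c, E1 c (u c)) * (∑' u : B → ℤ, ∏ c, E2 c (u c)) :=
        tsum_prod_mul (Aa := A → ℤ) (Bb := B → ℤ) (fun u => ∏ c, E1 c (u c)) (fun u => ∏ c, E2 c (u c))
    _ = (∏ c, ∑' z : ℤ, E1 c z) * (∏ c, ∑' z : ℤ, E2 c z) := by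
        rw [tsum_prod_pi E1, tsum_prod_pi E2]

lemma level_bound {A B : Type*} [Fintype A] [Fintype B]
    {v1 v2 : ℝ} (hv1 : A → 0 < v1) (hv2 : B → 0 < v2)
    (a1 b1 : A → ℤ) (a2 b2 : B → ℤ) {α : ℝ} (hα : 1 < α) :
    (∑' p : (A → ℤ) × (B → ℤ),
        (∏ c, (discreteGaussian v1 (p.1 c - a1 c) ^ α
            * discreteGaussian v1 (p.1 c - b1 c) ^ (1 - α))) *
        (∏ c, (discreteGaussian v2 (p.2 c - a2 c) ^ α
            * discreteGaussian v2 (p.2 c - b2 c) ^ (1 - α))))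
      ≤ ENNReal.ofReal (Real.exp (α * (α - 1) *
          ((∑ c : A, ((a1 c : ℝ) - (b1 c : ℝ)) ^ 2 / (2 * v1))
            + (∑ c : B, ((a2 c : ℝ) - (b2 c : ℝ)) ^ 2 / (2 * v2))))) := by
  calc (∑' p : (A → ℤ) × (B → ℤ),
        (∏ c, (discreteGaussian v1 (p.1 c - a1 c) ^ α
            * discreteGaussian v1 (p.1 c - b1 c) ^ (1 - α))) *
        (∏ c, (discreteGaussian v2 (p.2 c - a2 c) ^ α
            * discreteGaussian v2 (p.2 c - b2 c) ^ (1 - α))))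
      = (∏ c : A, ∑' z : ℤ, discreteGaussian v1 (z - a1 c) ^ α
            * discreteGaussian v1 (z - b1 c) ^ (1 - α)) *
        (∏ c : B, ∑' z : ℤ, discreteGaussian v2 (z - a2 c) ^ α
            * discreteGaussian v2 (z - b2 c) ^ (1 - α)) :=
        level_eq
          (fun c z => discreteGaussian v1 (z - a1 c) ^ α * discreteGaussian v1 (z - b1 c) ^ (1 - α))
          (fun c z => discreteGaussian v2 (z - a2 c) ^ α * discreteGaussian v2 (z - b2 c) ^ (1 - α))
    _ ≤ (∏ c : A, ENNReal.ofReal (Real.exp (α * (α - 1) * ((a1 c : ℝ) - (b1 c : ℝ)) ^ 2 / (2 * v1)))) *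
        (∏ c : B, ENNReal.ofReal (Real.exp (α * (α - 1) * ((a2 c : ℝ) - (b2 c : ℝ)) ^ 2 / (2 * v2)))) :=
        mul_le_mul' (Finset.prod_le_prod' fun c _ => coord_bound (hv1 c) _ _ hα)
          (Finset.prod_le_prod' fun c _ => coord_bound (hv2 c) _ _ hα)
    _ = ENNReal.ofReal (Real.exp (∑ c : A, α * (α - 1) * ((a1 c : ℝ) - (b1 c : ℝ)) ^ 2 / (2 * v1)))
        * ENNReal.ofReal (Real.exp (∑ c : B, α * (α - 1) * ((a2 c : ℝ) - (b2 c : ℝ)) ^ 2 / (2 * v2))) := by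
        rw [prod_ofReal_exp, prod_ofReal_exp]
    _ = ENNReal.ofReal (Real.exp (α * (α - 1) *
          ((∑ c : A, ((a1 c : ℝ) - (b1 c : ℝ)) ^ 2 / (2 * v1))
            + (∑ c : B, ((a2 c : ℝ) - (b2 c : ℝ)) ^ 2 / (2 * v2))))) := by
        rw [← ENNReal.ofReal_mul (Real.exp_nonneg _), ← Real.exp_add]
        refine congrArg ENNReal.ofReal (congrArg Real.exp ?_)
        rw [mul_add, Finset.mul_sum, Finset.mul_sum]
        exact congrArg₂ (· + ·) (Finset.sum_congr rfl fun c _ => by ring)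
          (Finset.sum_congr rfl fun c _ => by ring)



set_option maxHeartbeats 2000000 in
lemma grand {ι : Type*} [Fintype ι] {A B : ι → Type*} [∀ i, Fintype (A i)] [∀ i, Fintype (B i)]
    (v1 v2 : ι → ℝ) (hv1 : ∀ i, A i → 0 < v1 i) (hv2 : ∀ i, B i → 0 < v2 i)
    (a1 b1 : (i : ι) → A i → ℤ) (a2 b2 : (i : ι) → B i → ℤ) {α : ℝ} (hα : 1 < α) :
    (∑' w : (i : ι) → ((A i → ℤ) × (B i → ℤ)),
      (∏ i, ((∏ c, discreteGaussian (v1 i) ((w i).1 c - a1 i c)) *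
          (∏ c, discreteGaussian (v2 i) ((w i).2 c - a2 i c)))) ^ α *
      (∏ i, ((∏ c, discreteGaussian (v1 i) ((w i).1 c - b1 i c)) *
          (∏ c, discreteGaussian (v2 i) ((w i).2 c - b2 i c)))) ^ (1 - α))
      ≤ ENNReal.ofReal (Real.exp (α * (α - 1) *
          ∑ i, ((∑ c : A i, ((a1 i c : ℝ) - (b1 i c : ℝ)) ^ 2 / (2 * v1 i))
            + (∑ c : B i, ((a2 i c : ℝ) - (b2 i c : ℝ)) ^ 2 / (2 * v2 i))))) := by
  have h1 : ∀ w : (i : ι) → ((A i → ℤ) × (B i → ℤ)),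
      (∏ i, ((∏ c, discreteGaussian (v1 i) ((w i).1 c - a1 i c)) *
          (∏ c, discreteGaussian (v2 i) ((w i).2 c - a2 i c)))) ^ α *
      (∏ i, ((∏ c, discreteGaussian (v1 i) ((w i).1 c - b1 i c)) *
          (∏ c, discreteGaussian (v2 i) ((w i).2 c - b2 i c)))) ^ (1 - α)
      = ∏ i, ((∏ c, (discreteGaussian (v1 i) ((w i).1 c - a1 i c) ^ α
            * discreteGaussian (v1 i) ((w i).1 c - b1 i c) ^ (1 - α))) *
          (∏ c, (discreteGaussian (v2 i) ((w i).2 c - a2 i c) ^ α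
            * discreteGaussian (v2 i) ((w i).2 c - b2 i c) ^ (1 - α)))) := by
    intro w
    rw [prod_rpow' (fun i _ => ENNReal.mul_ne_top
        (ENNReal.prod_ne_top fun c _ => dg_ne_top _ _)
        (ENNReal.prod_ne_top fun c _ => dg_ne_top _ _)) α,
      prod_rpow' (fun i _ => ENNReal.mul_ne_top
        (ENNReal.prod_ne_top fun c _ => dg_ne_top _ _)
        (ENNReal.prod_ne_top fun c _ => dg_ne_top _ _)) (1 - α),
      ← Finset.prod_mul_distrib]
    refine Finset.prod_congr rfl fun i _ => ?_
    rw [ENNReal.mul_rpow_of_ne_top (ENNReal.prod_ne_top fun c _ => dg_ne_top _ _)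
        (ENNReal.prod_ne_top fun c _ => dg_ne_top _ _),
      ENNReal.mul_rpow_of_ne_top (ENNReal.prod_ne_top fun c _ => dg_ne_top _ _)
        (ENNReal.prod_ne_top fun c _ => dg_ne_top _ _),
      prod_rpow' (fun c _ => dg_ne_top _ _) α, prod_rpow' (fun c _ => dg_ne_top _ _) (1 - α),
      prod_rpow' (fun c _ => dg_ne_top _ _) α, prod_rpow' (fun c _ => dg_ne_top _ _) (1 - α),
      Finset.prod_mul_distrib, Finset.prod_mul_distrib]
    ring
  calc (∑' w : (i : ι) → ((A i → ℤ) × (B i → ℤ)),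
      (∏ i, ((∏ c, discreteGaussian (v1 i) ((w i).1 c - a1 i c)) *
          (∏ c, discreteGaussian (v2 i) ((w i).2 c - a2 i c)))) ^ α *
      (∏ i, ((∏ c, discreteGaussian (v1 i) ((w i).1 c - b1 i c)) *
          (∏ c, discreteGaussian (v2 i) ((w i).2 c - b2 i c)))) ^ (1 - α))
      = ∑' w : (i : ι) → ((A i → ℤ) × (B i → ℤ)),
          ∏ i, ((∏ c, (discreteGaussian (v1 i) ((w i).1 c - a1 i c) ^ α
            * discreteGaussian (v1 i) ((w i).1 c - b1 i c) ^ (1 - α))) *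
          (∏ c, (discreteGaussian (v2 i) ((w i).2 c - a2 i c) ^ α
            * discreteGaussian (v2 i) ((w i).2 c - b2 i c) ^ (1 - α)))) := tsum_congr h1
    _ = ∏ i, ∑' p : ((A i → ℤ) × (B i → ℤ)),
          ((∏ c, (discreteGaussian (v1 i) (p.1 c - a1 i c) ^ α
            * discreteGaussian (v1 i) (p.1 c - b1 i c) ^ (1 - α))) *
          (∏ c, (discreteGaussian (v2 i) (p.2 c - a2 i c) ^ α
            * discreteGaussian (v2 i) (p.2 c - b2 i c) ^ (1 - α)))) :=
        tsum_prod_pi (γ := fun i => (A i → ℤ) × (B i → ℤ)) (fun i p =>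
          ((∏ c, (discreteGaussian (v1 i) (p.1 c - a1 i c) ^ α
            * discreteGaussian (v1 i) (p.1 c - b1 i c) ^ (1 - α))) *
          (∏ c, (discreteGaussian (v2 i) (p.2 c - a2 i c) ^ α
            * discreteGaussian (v2 i) (p.2 c - b2 i c) ^ (1 - α)))))
    _ ≤ ∏ i, ENNReal.ofReal (Real.exp (α * (α - 1) *
          ((∑ c : A i, ((a1 i c : ℝ) - (b1 i c : ℝ)) ^ 2 / (2 * v1 i))
            + (∑ c : B i, ((a2 i c : ℝ) - (b2 i c : ℝ)) ^ 2 / (2 * v2 i))))) :=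
        Finset.prod_le_prod' fun i _ => level_bound (hv1 i) (hv2 i) _ _ _ _ hα
    _ = ENNReal.ofReal (Real.exp (∑ i, α * (α - 1) *
          ((∑ c : A i, ((a1 i c : ℝ) - (b1 i c : ℝ)) ^ 2 / (2 * v1 i))
            + (∑ c : B i, ((a2 i c : ℝ) - (b2 i c : ℝ)) ^ 2 / (2 * v2 i))))) :=
        prod_ofReal_exp _
    _ = ENNReal.ofReal (Real.exp (α * (α - 1) *
          ∑ i, ((∑ c : A i, ((a1 i c : ℝ) - (b1 i c : ℝ)) ^ 2 / (2 * v1 i))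
            + (∑ c : B i, ((a2 i c : ℝ) - (b2 i c : ℝ)) ^ 2 / (2 * v2 i))))) := by
        rw [Finset.mul_sum]


set_option maxHeartbeats 2000000 in
/-- Theorem 1: SafeTab-H satisfies `ρ_total`-zCDP, for the concrete mechanism that
jointly releases, for every level `i` and table class `t ∈ {HT, T}`, the stacked
count vector plus independent `N_ℤ(sᵢ/(2ρᵢᵗ))` noise on each coordinate. -/
theorem safetabH_zCDP {R : Type*} [DecidableEq R] (ω : ℕ) (hω : 1 ≤ ω)
    {PG : Fin ω → Type*} [∀ i, Fintype (PG i)] [∀ i, DecidableEq (PG i)]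
    {KHT : (i : Fin ω) → PG i → Type*} {KT : (i : Fin ω) → PG i → Type*}
    [∀ i P, Fintype (KHT i P)] [∀ i P, DecidableEq (KHT i P)]
    [∀ i P, Fintype (KT i P)] [∀ i P, DecidableEq (KT i P)]
    (T : (i : Fin ω) → Finset (PG i)) (g : (i : Fin ω) → R → Finset (PG i))
    (s : Fin ω → ℕ) (hs : ∀ i, ∀ r : R, (g i r).card ≤ s i)
    (fHT : (i : Fin ω) → (P : PG i) → R → KHT i P)
    (fT : (i : Fin ω) → (P : PG i) → R → KT i P)
    (ρHT ρT : Fin ω → ℝ) (hρHT : ∀ i, 0 < ρHT i) (hρT : ∀ i, 0 < ρT i)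
    (M : Multiset R →
      ((i : Fin ω) →
        ((((P : {P : PG i // P ∈ T i}) × KHT i P.val) → ℤ) ×
          (((P : {P : PG i // P ∈ T i}) × KT i P.val) → ℤ))) → ℝ≥0∞)
    (hM : ∀ D w, M D w = ∏ i : Fin ω,
      ((∏ c, discreteGaussian ((s i : ℝ) / (2 * ρHT i))
          ((w i).1 c - stackedCount (T i) (g i) (fHT i) D c)) *
        (∏ c, discreteGaussian ((s i : ℝ) / (2 * ρT i))
          ((w i).2 c - stackedCount (T i) (g i) (fT i) D c)))) :
    ∀ (D D' : Multiset R), Multiset.card (D - D' + (D' - D)) = 1 →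
      ∀ α : ℝ, 1 < α →
        renyiDiv α (M D) (M D') ≤ (((∑ i : Fin ω, (ρHT i + ρT i)) * α : ℝ) : EReal) := by
  intro D D' hDD α hα
  classical
  have hα1 : (0:ℝ) < α - 1 := by linarith
  have hα0 : (0:ℝ) < α := by linarith
  have hαα : (0:ℝ) ≤ α * (α - 1) := by nlinarith
  obtain ⟨r, hkey⟩ : ∃ r : R, ∀ i : Fin ω,
      (∀ c : ((P : {P : PG i // P ∈ T i}) × KHT i P.val),
        ((stackedCount (T i) (g i) (fHT i) D c : ℝ)
            - (stackedCount (T i) (g i) (fHT i) D' c : ℝ)) ^ 2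
          = (if c.1.val ∈ g i r ∧ fHT i c.1.val r = c.2 then (1:ℝ) else 0)) ∧
      (∀ c : ((P : {P : PG i // P ∈ T i}) × KT i P.val),
        ((stackedCount (T i) (g i) (fT i) D c : ℝ)
            - (stackedCount (T i) (g i) (fT i) D' c : ℝ)) ^ 2
          = (if c.1.val ∈ g i r ∧ fT i c.1.val r = c.2 then (1:ℝ) else 0)) := by
    have hsq : ∀ (x y : ℤ) (p : Prop) (hp : Decidable p), x = y + (if p then 1 else 0) →
        ((x : ℝ) - (y : ℝ)) ^ 2 = (if p then (1:ℝ) else 0) := by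
      intro x y p hp h
      subst h
      split <;> push_cast <;> ring
    rcases neighbor_cases D D' hDD with ⟨r, rfl⟩ | ⟨r, rfl⟩
    · exact ⟨r, fun i =>
        ⟨fun c => hsq _ _ _ _ (count_diff (T i) (g i) (fHT i) D' r c),
         fun c => hsq _ _ _ _ (count_diff (T i) (g i) (fT i) D' r c)⟩⟩
    · refine ⟨r, fun i => ⟨fun c => ?_, fun c => ?_⟩⟩
      · rw [show ((stackedCount (T i) (g i) (fHT i) D c : ℝ)
            - (stackedCount (T i) (g i) (fHT i) (D + {r}) c : ℝ)) ^ 2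
          = ((stackedCount (T i) (g i) (fHT i) (D + {r}) c : ℝ)
            - (stackedCount (T i) (g i) (fHT i) D c : ℝ)) ^ 2 from by ring]
        exact hsq _ _ _ _ (count_diff (T i) (g i) (fHT i) D r c)
      · rw [show ((stackedCount (T i) (g i) (fT i) D c : ℝ)
            - (stackedCount (T i) (g i) (fT i) (D + {r}) c : ℝ)) ^ 2
          = ((stackedCount (T i) (g i) (fT i) (D + {r}) c : ℝ)
            - (stackedCount (T i) (g i) (fT i) D c : ℝ)) ^ 2 from by ring]
        exact hsq _ _ _ _ (count_diff (T i) (g i) (fT i) D r c)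
  by_cases hbad : ∃ i : Fin ω, s i = 0 ∧
      (Nonempty ((P : {P : PG i // P ∈ T i}) × KHT i P.val) ∨
        Nonempty ((P : {P : PG i // P ∈ T i}) × KT i P.val))
  · obtain ⟨i0, hs0, hne⟩ := hbad
    have hMzero : ∀ w, M D w = 0 := by
      intro w
      rw [hM]
      refine Finset.prod_eq_zero (Finset.mem_univ i0) ?_
      rcases hne with h | h <;> obtain ⟨c⟩ := h
      · refine mul_eq_zero_of_left (Finset.prod_eq_zero (Finset.mem_univ c) ?_) _
        rw [show (s i0 : ℝ) / (2 * ρHT i0) = 0 by rw [hs0]; norm_num]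
        exact dg_zero _
      · refine mul_eq_zero_of_right _ (Finset.prod_eq_zero (Finset.mem_univ c) ?_)
        rw [show (s i0 : ℝ) / (2 * ρT i0) = 0 by rw [hs0]; norm_num]
        exact dg_zero _
    have hzero : (∑' w, M D w ^ α * M D' w ^ (1 - α)) = 0 := by
      have h0 : ∀ w, M D w ^ α * M D' w ^ (1 - α) = 0 := fun w => by
        rw [hMzero w, ENNReal.zero_rpow_of_pos hα0, zero_mul]
      rw [tsum_congr h0, tsum_zero]
    simp only [renyiDiv]
    rw [hzero, ENNReal.log_zero, EReal.mul_bot_of_pos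
      (show (0:EReal) < (((α - 1)⁻¹ : ℝ) : EReal) from by exact_mod_cast inv_pos.mpr hα1)]
    exact bot_le
  push_neg at hbad
  have hspos1 : ∀ i : Fin ω, ((P : {P : PG i // P ∈ T i}) × KHT i P.val) → 0 < (s i : ℝ) := by
    intro i c
    have : s i ≠ 0 := fun h0 => (hbad i h0).1.elim' c
    exact_mod_cast Nat.pos_of_ne_zero this
  have hspos2 : ∀ i : Fin ω, ((P : {P : PG i // P ∈ T i}) × KT i P.val) → 0 < (s i : ℝ) := by
    intro i c
    have : s i ≠ 0 := fun h0 => (hbad i h0).2.elim' c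
    exact_mod_cast Nat.pos_of_ne_zero this
  have hv1pos : ∀ i : Fin ω, ((P : {P : PG i // P ∈ T i}) × KHT i P.val) →
      0 < (s i : ℝ) / (2 * ρHT i) := fun i c =>
    div_pos (hspos1 i c) (by linarith [hρHT i])
  have hv2pos : ∀ i : Fin ω, ((P : {P : PG i // P ∈ T i}) × KT i P.val) →
      0 < (s i : ℝ) / (2 * ρT i) := fun i c =>
    div_pos (hspos2 i c) (by linarith [hρT i])
  have hE1 : ∀ i : Fin ω,
      (∑ c : ((P : {P : PG i // P ∈ T i}) × KHT i P.val),
          ((stackedCount (T i) (g i) (fHT i) D c : ℝ)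
            - (stackedCount (T i) (g i) (fHT i) D' c : ℝ)) ^ 2 / (2 * ((s i : ℝ) / (2 * ρHT i))))
        ≤ ρHT i := by
    intro i
    by_cases hne : Nonempty ((P : {P : PG i // P ∈ T i}) × KHT i P.val)
    · have hsp : 0 < (s i : ℝ) := hspos1 i hne.some
      have hρp := hρHT i
      have hd : ∑ c : ((P : {P : PG i // P ∈ T i}) × KHT i P.val),
          ((stackedCount (T i) (g i) (fHT i) D c : ℝ)
            - (stackedCount (T i) (g i) (fHT i) D' c : ℝ)) ^ 2 ≤ (s i : ℝ) :=
        calc _ = ∑ c : ((P : {P : PG i // P ∈ T i}) × KHT i P.val),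
              (if c.1.val ∈ g i r ∧ fHT i c.1.val r = c.2 then (1:ℝ) else 0) :=
              Finset.sum_congr rfl fun c _ => (hkey i).1 c
          _ ≤ ((g i r).card : ℝ) := sum_ind_le (T i) (g i) (fHT i) r
          _ ≤ (s i : ℝ) := Nat.cast_le.mpr (hs i r)
      have h2v : 2 * ((s i : ℝ) / (2 * ρHT i)) = (s i : ℝ) / ρHT i := by
        field_simp
      have hsr : 0 < (s i : ℝ) / ρHT i := div_pos hsp hρp
      calc (∑ c : ((P : {P : PG i // P ∈ T i}) × KHT i P.val),
            ((stackedCount (T i) (g i) (fHT i) D c : ℝ)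
              - (stackedCount (T i) (g i) (fHT i) D' c : ℝ)) ^ 2 / (2 * ((s i : ℝ) / (2 * ρHT i))))
          = (∑ c : ((P : {P : PG i // P ∈ T i}) × KHT i P.val),
              ((stackedCount (T i) (g i) (fHT i) D c : ℝ)
                - (stackedCount (T i) (g i) (fHT i) D' c : ℝ)) ^ 2) / ((s i : ℝ) / ρHT i) := by
            rw [← Finset.sum_div, h2v]
        _ ≤ (s i : ℝ) / ((s i : ℝ) / ρHT i) := by gcongr
        _ = ρHT i := by field_simp
    · haveI : IsEmpty ((P : {P : PG i // P ∈ T i}) × KHT i P.val) := not_nonempty_iff.mp hne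
      rw [Finset.univ_eq_empty, Finset.sum_empty]
      exact (hρHT i).le
  have hE2 : ∀ i : Fin ω,
      (∑ c : ((P : {P : PG i // P ∈ T i}) × KT i P.val),
          ((stackedCount (T i) (g i) (fT i) D c : ℝ)
            - (stackedCount (T i) (g i) (fT i) D' c : ℝ)) ^ 2 / (2 * ((s i : ℝ) / (2 * ρT i))))
        ≤ ρT i := by
    intro i
    by_cases hne : Nonempty ((P : {P : PG i // P ∈ T i}) × KT i P.val)
    · have hsp : 0 < (s i : ℝ) := hspos2 i hne.some
      have hρp := hρT i
      have hd : ∑ c : ((P : {P : PG i // P ∈ T i}) × KT i P.val),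
          ((stackedCount (T i) (g i) (fT i) D c : ℝ)
            - (stackedCount (T i) (g i) (fT i) D' c : ℝ)) ^ 2 ≤ (s i : ℝ) :=
        calc _ = ∑ c : ((P : {P : PG i // P ∈ T i}) × KT i P.val),
              (if c.1.val ∈ g i r ∧ fT i c.1.val r = c.2 then (1:ℝ) else 0) :=
              Finset.sum_congr rfl fun c _ => (hkey i).2 c
          _ ≤ ((g i r).card : ℝ) := sum_ind_le (T i) (g i) (fT i) r
          _ ≤ (s i : ℝ) := Nat.cast_le.mpr (hs i r)
      have h2v : 2 * ((s i : ℝ) / (2 * ρT i)) = (s i : ℝ) / ρT i := by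
        field_simp
      have hsr : 0 < (s i : ℝ) / ρT i := div_pos hsp hρp
      calc (∑ c : ((P : {P : PG i // P ∈ T i}) × KT i P.val),
            ((stackedCount (T i) (g i) (fT i) D c : ℝ)
              - (stackedCount (T i) (g i) (fT i) D' c : ℝ)) ^ 2 / (2 * ((s i : ℝ) / (2 * ρT i))))
          = (∑ c : ((P : {P : PG i // P ∈ T i}) × KT i P.val),
              ((stackedCount (T i) (g i) (fT i) D c : ℝ)
                - (stackedCount (T i) (g i) (fT i) D' c : ℝ)) ^ 2) / ((s i : ℝ) / ρT i) := by
            rw [← Finset.sum_div, h2v]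
        _ ≤ (s i : ℝ) / ((s i : ℝ) / ρT i) := by gcongr
        _ = ρT i := by field_simp
    · haveI : IsEmpty ((P : {P : PG i // P ∈ T i}) × KT i P.val) := not_nonempty_iff.mp hne
      rw [Finset.univ_eq_empty, Finset.sum_empty]
      exact (hρT i).le
  have hZbound : (∑' w, M D w ^ α * M D' w ^ (1 - α))
      ≤ ENNReal.ofReal (Real.exp (α * (α - 1) * ∑ i : Fin ω, (ρHT i + ρT i))) := by
    have hgrand := grand (fun i => (s i : ℝ) / (2 * ρHT i)) (fun i => (s i : ℝ) / (2 * ρT i))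
      hv1pos hv2pos
      (fun i => stackedCount (T i) (g i) (fHT i) D) (fun i => stackedCount (T i) (g i) (fHT i) D')
      (fun i => stackedCount (T i) (g i) (fT i) D) (fun i => stackedCount (T i) (g i) (fT i) D') hα
    refine le_trans (le_trans (le_of_eq (tsum_congr fun w => by rw [hM, hM])) hgrand) ?_
    refine ENNReal.ofReal_le_ofReal (Real.exp_le_exp.mpr ?_)
    rw [Finset.mul_sum, Finset.mul_sum]
    refine Finset.sum_le_sum fun i _ => ?_
    exact mul_le_mul_of_nonneg_left (add_le_add (hE1 i) (hE2 i)) hαα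
  simp only [renyiDiv]
  have hlog : ENNReal.log (∑' w, M D w ^ α * M D' w ^ (1 - α))
      ≤ ((α * (α - 1) * ∑ i : Fin ω, (ρHT i + ρT i) : ℝ) : EReal) := by
    refine (ENNReal.log_monotone hZbound).trans ?_
    rw [ENNReal.log_ofReal_of_pos (Real.exp_pos _), Real.log_exp]
  have hq : ((∑ i : Fin ω, (ρHT i + ρT i)) * α : ℝ)
      = (α - 1)⁻¹ * (α * (α - 1) * ∑ i : Fin ω, (ρHT i + ρT i)) := by
    field_simp
  rw [hq]
  exact ereal_final (inv_pos.mpr hα1) hlog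
end
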